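/- Let n be an even positive integer and ξ a complex non-real algebraic number of degree n+2 such that [ℚ(ξ) : ℚ(ξ) ∩ ℝ] = 2. Then t_n(ξ) = (n+2)/2, i.e., there exists μ ∈ ℚ(ξ)* such that the space of rational polynomials f of degree at most n with μ·f(ξ) ∈ ℝ has dimension (n+2)/2. -/

import Mathlib

open Polynomial

/-- The ℚ-vector space of polynomials `f ∈ ℚ[X]` of degree at most `n`
with `μ * f(ξ) ∈ ℝ`. -/
noncomputable def Vspace (n : ℕ) (μ ξ : ℂ) : Submodule ℚ ℚ[X] where
  carrier := {f | f.natDegree ≤ n ∧ ∃ r : ℝ, μ * aeval ξ f = (r : ℂ)}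
  zero_mem' := ⟨by simp, 0, by simp⟩
  add_mem' := by
    rintro f g ⟨hf, r, hr⟩ ⟨hg, s, hs⟩
    refine ⟨(natDegree_add_le f g).trans (by simp [hf, hg]), r + s, ?_⟩
    push_cast
    rw [map_add, mul_add, hr, hs]
  smul_mem' := by
    rintro c f ⟨hf, r, hr⟩
    refine ⟨(natDegree_smul_le c f).trans hf, c * r, ?_⟩
    rw [map_smul, Algebra.mul_smul_comm, hr, Rat.smul_def]
    push_cast
    ring

/-- `t_n(ξ)`: the maximum over nonzero `μ ∈ ℂ` of `dim_ℚ V_n(μ,ξ)`. -/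
noncomputable def tdeg (n : ℕ) (ξ : ℂ) : ℕ :=
  sSup {d : ℕ | ∃ μ : ℂ, μ ≠ 0 ∧ d = Module.finrank ℚ (Vspace n μ ξ)}

/-- The subfield of real elements of `ℂ`, as an intermediate field of `ℚ ⊆ ℂ`. -/
noncomputable def realSubfield : IntermediateField ℚ ℂ :=
  Subfield.toIntermediateField Complex.ofRealHom.fieldRange
    (fun x => ⟨(x : ℝ), by simp⟩)


lemma mem_Vspace {n : ℕ} {μ ξ : ℂ} {f : ℚ[X]} :
    f ∈ Vspace n μ ξ ↔ f.natDegree ≤ n ∧ ∃ r : ℝ, μ * aeval ξ f = (r : ℂ) := Iff.rfl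

lemma mem_realSubfield {z : ℂ} : z ∈ realSubfield ↔ ∃ r : ℝ, (r : ℂ) = z := Iff.rfl

lemma aeval_ne_zero_of_natDegree_le {n : ℕ} {ξ : ℂ}
    (hdeg : (minpoly ℚ ξ).natDegree = n + 2)
    {f : ℚ[X]} (hf : f.natDegree ≤ n) (hf0 : f ≠ 0) : aeval ξ f ≠ 0 := by
  intro h
  have h1 := minpoly.degree_le_of_ne_zero ℚ ξ hf0 h
  have h2 : (minpoly ℚ ξ).natDegree ≤ f.natDegree := natDegree_le_natDegree h1
  omega

set_option maxHeartbeats 1000000 in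
/-- Upper bound: for any nonzero `μ`, `V` injects into `K ⊓ ℝ`. -/
lemma Vspace_finrank_le {n : ℕ} {ξ : ℂ} (hξalg : IsAlgebraic ℚ ξ)
    (hdeg : (minpoly ℚ ξ).natDegree = n + 2) (μ : ℂ) (hμ : μ ≠ 0) :
    FiniteDimensional ℚ (Vspace n μ ξ) ∧
      Module.finrank ℚ (Vspace n μ ξ) ≤ Module.finrank ℚ
        (IntermediateField.adjoin ℚ {ξ} ⊓ realSubfield : IntermediateField ℚ ℂ) := by
  classical
  set Fif := (IntermediateField.adjoin ℚ {ξ} ⊓ realSubfield : IntermediateField ℚ ℂ) with hFif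
  haveI : FiniteDimensional ℚ (IntermediateField.adjoin ℚ {ξ}) :=
    IntermediateField.adjoin.finiteDimensional hξalg.isIntegral
  haveI hFD : FiniteDimensional ℚ Fif := by
    have h1 : FiniteDimensional ℚ (IntermediateField.adjoin ℚ {ξ}).toSubmodule :=
      IntermediateField.adjoin.finiteDimensional hξalg.isIntegral
    have h2 : Fif.toSubmodule ≤ (IntermediateField.adjoin ℚ {ξ}).toSubmodule :=
      fun x hx => (inf_le_left : Fif ≤ _) hx
    exact Submodule.finiteDimensional_of_le h2
  by_cases hV : Vspace n μ ξ = ⊥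
  · constructor
    · rw [hV]; infer_instance
    · rw [hV]; simp
  · obtain ⟨g, hgV, hg0⟩ := Submodule.ne_bot_iff _ |>.1 hV
    obtain ⟨hgd, s, hs⟩ := mem_Vspace.1 hgV
    have hgz : aeval ξ g ≠ 0 := aeval_ne_zero_of_natDegree_le hdeg hgd hg0
    set c : ℂ := (aeval ξ g)⁻¹ with hc
    have hs0 : s ≠ 0 := by
      intro h; apply mul_ne_zero hμ hgz; rw [hs, h]; norm_num
    have hmem : ∀ f : ℚ[X], f ∈ Vspace n μ ξ → aeval ξ f * c ∈ Fif := by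
      rintro f ⟨hfd, r, hr⟩
      rw [IntermediateField.mem_inf]
      constructor
      · exact mul_mem
          (IntermediateField.algebra_adjoin_le_adjoin ℚ {ξ} (aeval_mem_adjoin_singleton ℚ ξ))
          (IntermediateField.inv_mem _
            (IntermediateField.algebra_adjoin_le_adjoin ℚ {ξ} (aeval_mem_adjoin_singleton ℚ ξ)))
      · rw [mem_realSubfield]
        refine ⟨r * s⁻¹, ?_⟩
        have : aeval ξ f * c = (μ * aeval ξ f) * (μ * aeval ξ g)⁻¹ := by
          rw [hc]; field_simp
        rw [this, hr, hs]
        push_cast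
        ring
    let Φ : (Vspace n μ ξ) →ₗ[ℚ] Fif :=
      { toFun := fun f => ⟨aeval ξ (f : ℚ[X]) * c, hmem f f.2⟩
        map_add' := fun f g => by
          ext; simp [add_mul]
        map_smul' := fun q f => by
          ext; simp [smul_mul_assoc] }
    have hΦ : Function.Injective Φ := by
      intro f₁ f₂ hf
      have h1 : aeval ξ (f₁ : ℚ[X]) * c = aeval ξ (f₂ : ℚ[X]) * c := congrArg Subtype.val hf
      have hcne : c ≠ 0 := inv_ne_zero hgz
      have h2 : aeval ξ (f₁ : ℚ[X]) = aeval ξ (f₂ : ℚ[X]) := mul_right_cancel₀ hcne h1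
      have h3 : ((f₁ : ℚ[X]) - (f₂ : ℚ[X])) = 0 := by
        by_contra h4
        exact aeval_ne_zero_of_natDegree_le hdeg
          ((natDegree_sub_le _ _).trans (by simp [(mem_Vspace.1 f₁.2).1, (mem_Vspace.1 f₂.2).1]))
          h4 (by rw [map_sub, h2, sub_self])
      exact Subtype.ext (sub_eq_zero.1 h3)
    exact ⟨FiniteDimensional.of_injective Φ hΦ,
      LinearMap.finrank_le_finrank_of_injective hΦ⟩

set_option maxHeartbeats 2000000 in
theorem tdeg_of_degree_n_add_two_and_index_two (n : ℕ) (hn : 0 < n) (hne : Even n)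
    (ξ : ℂ) (hξreal : ξ.im ≠ 0) (hξalg : IsAlgebraic ℚ ξ)
    (hdeg : (minpoly ℚ ξ).natDegree = n + 2)
    (hindex : 2 * Module.finrank ℚ
      (IntermediateField.adjoin ℚ {ξ} ⊓ realSubfield : IntermediateField ℚ ℂ)
      = (minpoly ℚ ξ).natDegree) :
    2 * tdeg n ξ = n + 2 ∧
      ∃ μ : ℂ, μ ≠ 0 ∧ μ ∈ IntermediateField.adjoin ℚ {ξ} ∧
        2 * Module.finrank ℚ (Vspace n μ ξ) = n + 2 := by
  classical
  set K := IntermediateField.adjoin ℚ {ξ} with hK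
  haveI : FiniteDimensional ℚ K := IntermediateField.adjoin.finiteDimensional hξalg.isIntegral
  have hKrank : Module.finrank ℚ K = n + 2 := by
    rw [hK, IntermediateField.adjoin.finrank hξalg.isIntegral, hdeg]
  set gen := IntermediateField.AdjoinSimple.gen ℚ ξ with hgen
  set D := Polynomial.degreeLT ℚ (n+1) with hD
  have hDrank : Module.finrank ℚ D = n + 1 := by
    rw [LinearEquiv.finrank_eq (Polynomial.degreeLTEquiv ℚ (n+1))]
    simp
  have hDdeg : ∀ f : ℚ[X], f ∈ D → f.natDegree ≤ n := by
    intro f hf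
    rcases eq_or_ne f 0 with rfl | h0
    · simp
    · have := (Polynomial.natDegree_lt_iff_degree_lt h0).2 (Polynomial.mem_degreeLT.1 hf)
      omega
  have hDdeg' : ∀ f : ℚ[X], f.natDegree ≤ n → f ∈ D := by
    intro f hf
    rw [Polynomial.mem_degreeLT]
    exact lt_of_le_of_lt Polynomial.degree_le_natDegree (by exact_mod_cast Nat.lt_succ_of_le hf)
  let eD : D →ₗ[ℚ] K := (Polynomial.aeval gen).toLinearMap.comp D.subtype
  have hval : ∀ f : ℚ[X], ((Polynomial.aeval gen f : K) : ℂ) = Polynomial.aeval ξ f := by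
    intro f
    rw [show ((Polynomial.aeval gen f : K) : ℂ) = K.val (Polynomial.aeval gen f) from rfl,
      ← Polynomial.aeval_algHom_apply]
    simp [hgen]
  have heD : Function.Injective eD := by
    intro f₁ f₂ h
    have h1 : Polynomial.aeval ξ ((f₁ : ℚ[X]) - (f₂ : ℚ[X])) = 0 := by
      rw [map_sub, ← hval, ← hval]
      have : eD f₁ = eD f₂ := h
      simp only [eD, LinearMap.comp_apply, AlgHom.toLinearMap_apply, Submodule.subtype_apply] at this
      rw [this, sub_self]
    have h3 : ((f₁ : ℚ[X]) - (f₂ : ℚ[X])) = 0 := by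
      by_contra h4
      exact aeval_ne_zero_of_natDegree_le hdeg
        ((natDegree_sub_le _ _).trans (by simp [hDdeg _ f₁.2, hDdeg _ f₂.2])) h4 h1
    exact Subtype.ext (sub_eq_zero.1 h3)
  set W' := LinearMap.range eD with hW'
  have hW'rank : Module.finrank ℚ W' = n + 1 := by
    rw [hW', LinearMap.finrank_range_of_inj heD, hDrank]
  have hQrank : Module.finrank ℚ (K ⧸ W') = 1 := by
    have := W'.finrank_quotient_add_finrank
    omega
  set Fif := (K ⊓ realSubfield : IntermediateField ℚ ℂ) with hFif
  haveI hFD : FiniteDimensional ℚ Fif := by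
    have h1 : FiniteDimensional ℚ K.toSubmodule :=
      IntermediateField.adjoin.finiteDimensional hξalg.isIntegral
    have h2 : Fif.toSubmodule ≤ K.toSubmodule := fun x hx => (inf_le_left : Fif ≤ K) hx
    exact Submodule.finiteDimensional_of_le h2
  have hFle : Fif ≤ K := inf_le_left
  let incl : Fif →ₗ[ℚ] K :=
    { toFun := fun z => ⟨(z : ℂ), hFle z.2⟩
      map_add' := fun _ _ => rfl
      map_smul' := fun _ _ => rfl }
  let T : K →ₗ[ℚ] (Fif →ₗ[ℚ] (K ⧸ W')) :=
    { toFun := fun a =>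
        { toFun := fun z => W'.mkQ (a * incl z)
          map_add' := fun z₁ z₂ => by simp [mul_add]
          map_smul' := fun q z => by simp [Algebra.mul_smul_comm] }
      map_add' := fun a b => LinearMap.ext fun z => by simp [add_mul]
      map_smul' := fun q a => LinearMap.ext fun z => by simp [smul_mul_assoc] }
  have hm2 : 2 * Module.finrank ℚ Fif = n + 2 := by rw [hindex, hdeg]
  have hTne : ¬ Function.Injective T := by
    intro hT
    have h1 := LinearMap.finrank_le_finrank_of_injective hT
    rw [Module.finrank_linearMap, hQrank, mul_one, hKrank] at h1
    omega
  have hker : LinearMap.ker T ≠ ⊥ := fun hk => hTne (LinearMap.ker_eq_bot.1 hk)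
  obtain ⟨a, haker, ha0⟩ := (Submodule.ne_bot_iff _).1 hker
  have hTa : ∀ z : Fif, a * incl z ∈ W' := by
    intro z
    have h0 : (T a) z = 0 := by rw [LinearMap.mem_ker.1 haker]; rfl
    have : W'.mkQ (a * incl z) = 0 := h0
    rwa [Submodule.mkQ_apply, Submodule.Quotient.mk_eq_zero] at this
  have haC : (a : ℂ) ≠ 0 := fun h => ha0 (Subtype.ext h)
  set μ := ((a : ℂ))⁻¹ with hμdef
  have hμ0 : μ ≠ 0 := inv_ne_zero haC
  have hμK : μ ∈ K := K.inv_mem a.2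
  -- the injection Fif →ₗ V
  let eEquiv : D ≃ₗ[ℚ] W' := LinearEquiv.ofInjective eD heD
  have heq : ∀ w : W', eD (eEquiv.symm w) = (w : K) := by
    intro w
    conv_rhs => rw [← eEquiv.apply_symm_apply w]
    rfl
  let mulA : Fif →ₗ[ℚ] W' :=
    { toFun := fun z => ⟨a * incl z, hTa z⟩
      map_add' := fun z₁ z₂ => Subtype.ext (by simp [mul_add])
      map_smul' := fun q z => Subtype.ext (by simp [Algebra.mul_smul_comm]) }
  let χ : Fif →ₗ[ℚ] ℚ[X] := D.subtype ∘ₗ (eEquiv.symm.toLinearMap) ∘ₗ mulA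
  have hχ : ∀ z : Fif, Polynomial.aeval gen (χ z) = a * incl z := by
    intro z
    have := heq (mulA z)
    simp [χ, eD] at this ⊢
    exact this
  have hχV : ∀ z : Fif, χ z ∈ Vspace n μ ξ := by
    intro z
    refine mem_Vspace.2 ⟨hDdeg _ (eEquiv.symm (mulA z)).2, ?_⟩
    have h1 : Polynomial.aeval ξ (χ z) = (a : ℂ) * (z : ℂ) := by
      rw [← hval, hχ z]; push_cast; rfl
    obtain ⟨r, hr⟩ := mem_realSubfield.1 ((inf_le_right : Fif ≤ realSubfield) z.2)
    exact ⟨r, by rw [h1, hμdef, inv_mul_cancel_left₀ haC, hr]⟩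
  let Ψ : Fif →ₗ[ℚ] (Vspace n μ ξ) := χ.codRestrict _ hχV
  have hΨ : Function.Injective Ψ := by
    intro z₁ z₂ h
    have h1 : χ z₁ = χ z₂ := by
      have h1' : ((Ψ z₁ : ℚ[X])) = (Ψ z₂ : ℚ[X]) := by rw [h]
      exact h1'
    have h2 : Polynomial.aeval gen (χ z₁) = Polynomial.aeval gen (χ z₂) := by rw [h1]
    rw [hχ, hχ] at h2
    have h3 : incl z₁ = incl z₂ := mul_left_cancel₀ ha0 h2
    have h4 : (z₁ : ℂ) = (z₂ : ℂ) := by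
      have h4' : ((incl z₁ : ℂ)) = (incl z₂ : ℂ) := by rw [h3]
      exact h4'
    exact Subtype.ext h4
  -- hindex in terms of Fif
  rw [hdeg] at hindex
  -- conclude
  haveI hVfd := (Vspace_finrank_le hξalg hdeg μ hμ0).1
  have hge : Module.finrank ℚ Fif ≤ Module.finrank ℚ (Vspace n μ ξ) :=
    LinearMap.finrank_le_finrank_of_injective hΨ
  have hle : Module.finrank ℚ (Vspace n μ ξ) ≤ Module.finrank ℚ Fif :=
    (Vspace_finrank_le hξalg hdeg μ hμ0).2
  have hVrank : Module.finrank ℚ (Vspace n μ ξ) = Module.finrank ℚ Fif := le_antisymm hle hge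
  have hmemS : Module.finrank ℚ Fif ∈
      {d : ℕ | ∃ μ' : ℂ, μ' ≠ 0 ∧ d = Module.finrank ℚ (Vspace n μ' ξ)} :=
    ⟨μ, hμ0, hVrank.symm⟩
  have hub : ∀ d ∈ {d : ℕ | ∃ μ' : ℂ, μ' ≠ 0 ∧ d = Module.finrank ℚ (Vspace n μ' ξ)},
      d ≤ Module.finrank ℚ Fif := by
    rintro d ⟨μ', hμ', rfl⟩
    exact (Vspace_finrank_le hξalg hdeg μ' hμ').2
  have htdeg : tdeg n ξ = Module.finrank ℚ Fif := by
    refine le_antisymm (csSup_le ⟨_, hmemS⟩ hub) (le_csSup ⟨_, hub⟩ hmemS)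
  refine ⟨by rw [htdeg]; exact hindex, μ, hμ0, hμK, by rw [hVrank]; exact hindex⟩
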